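/- Let A be a finite abelian group and A' a subgroup of A. Every subset of A' which is nonseparating for A' is also nonseparating for A. -/

import Mathlib

def middleTwoEq (c : Fin 4 → ℕ) : Prop :=
  (Multiset.sort {c 0, c 1, c 2, c 3} (· ≤ ·)).getD 1 0 =
  (Multiset.sort {c 0, c 1, c 2, c 3} (· ≤ ·)).getD 2 0

/-- `c` is the coset number of the pair `{x, -x}` relative to `B` and the
generator `a + B` of `A ⧸ B`: `0 ≤ c ≤ n/2` and `(c • a + B) ∩ {x, -x} ≠ ∅`. -/
def IsCosetNum {A : Type*} [AddCommGroup A] (B : AddSubgroup A) (a x : A) (c : ℕ) : Prop :=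
  c ≤ Nat.card (A ⧸ B) / 2 ∧ (x - c • a ∈ B ∨ x + c • a ∈ B)

/-- The four pairs `{± h i}` are disjoint and for every cyclic subgroup `B` with
cyclic quotient and every generator of the quotient, the middle two of the four
coset numbers agree. -/
def NonsepTuple {A : Type*} [AddCommGroup A] (h : Fin 4 → A) : Prop :=
  (∀ i j : Fin 4, i ≠ j → h i ≠ h j ∧ h i ≠ -h j) ∧
  ∀ B : AddSubgroup A, IsAddCyclic B → IsAddCyclic (A ⧸ B) →
    ∀ a : A, (∀ x : A ⧸ B, x ∈ AddSubgroup.zmultiples ((QuotientAddGroup.mk a : A ⧸ B))) →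
      ∀ c : Fin 4 → ℕ, (∀ i, IsCosetNum B a (h i) (c i)) → middleTwoEq c

/-- `H` is a nonseparating subset of `A`. -/
def IsNonseparating {A : Type*} [AddCommGroup A] (H : Set A) : Prop :=
  ∃ h : Fin 4 → A, H = (⋃ i, {h i, -h i}) ∧ NonsepTuple h

lemma sort_map_mul (k : ℕ) (m : Multiset ℕ) :
    Multiset.sort (m.map (fun x => k * x)) (· ≤ ·) =
    (Multiset.sort m (· ≤ ·)).map (fun x => k * x) := by
  refine (fun hp h1 h2 => List.Perm.eq_of_pairwise' h1 h2 hp) ?_ (Multiset.pairwise_sort _ _) ?_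
  · rw [← Multiset.coe_eq_coe, Multiset.sort_eq, ← Multiset.map_coe, Multiset.sort_eq]
  · exact List.Pairwise.map _ (fun a b hab => Nat.mul_le_mul_left k hab)
      (Multiset.pairwise_sort m _)

lemma middleTwoEq_mul (k : ℕ) {d : Fin 4 → ℕ} (h : middleTwoEq d) :
    middleTwoEq (fun i => k * d i) := by
  unfold middleTwoEq at h ⊢
  have hm : ({k * d 0, k * d 1, k * d 2, k * d 3} : Multiset ℕ)
      = ({d 0, d 1, d 2, d 3} : Multiset ℕ).map (fun x => k * x) := by
    simp
  show (Multiset.sort {k * d 0, k * d 1, k * d 2, k * d 3} (· ≤ ·)).getD 1 0 =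
    (Multiset.sort {k * d 0, k * d 1, k * d 2, k * d 3} (· ≤ ·)).getD 2 0
  rw [hm, sort_map_mul]
  have hlen : (Multiset.sort ({d 0, d 1, d 2, d 3} : Multiset ℕ) (· ≤ ·)).length = 4 := by
    rw [Multiset.length_sort]; rfl
  set L := Multiset.sort ({d 0, d 1, d 2, d 3} : Multiset ℕ) (· ≤ ·) with hL
  match L, hlen, h with
  | [a, b, e, f], _, h => exact congrArg (fun x => k * x) h

/-- A subset of a subgroup `A'` of a finite abelian group `A` which is nonseparating
for `A'` is nonseparating for `A`. -/
theorem stmt_10 {A : Type*} [AddCommGroup A] [Finite A] (A' : AddSubgroup A)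
    (H : Set A') (hH : IsNonseparating H) :
    IsNonseparating ((Subtype.val) '' H : Set A) := by
  obtain ⟨h, hHeq, hdist, hmain⟩ := hH
  refine ⟨fun i => (h i : A), ?_, ?_, ?_⟩
  · rw [hHeq, Set.image_iUnion]
    refine Set.iUnion_congr fun i => ?_
    ext x
    simp [Set.image_insert_eq]
  · intro i j hij
    obtain ⟨h1, h2⟩ := hdist i j hij
    refine ⟨fun e => h1 (Subtype.ext e), fun e => h2 (Subtype.ext (by simpa using e))⟩
  · intro B hB hQB a ha c hc
    classical
    set G := A ⧸ B with hG
    let φ : A' →+ G := (QuotientAddGroup.mk' B).comp A'.subtype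
    have hφ : ∀ x : A', φ x = QuotientAddGroup.mk (x : A) := fun x => rfl
    set B' := φ.ker with hB'def
    set K := φ.range with hKdef
    set g : G := QuotientAddGroup.mk a with hgdef
    set n := Nat.card G with hn
    set m := Nat.card K with hm
    have hn0 : 0 < n := Nat.card_pos
    have hm0 : 0 < m := Nat.card_pos
    have hmn : m ∣ n := AddSubgroup.card_addSubgroup_dvd_card K
    obtain ⟨k, hk⟩ : ∃ k, n = k * m := ⟨n / m, by rw [Nat.div_mul_cancel hmn]⟩
    have hk0 : 0 < k := Nat.pos_of_ne_zero (by rintro rfl; simp at hk; omega)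
    have hkdvd : k ∣ n := ⟨m, hk⟩
    have hg_ord : addOrderOf g = n := by
      rw [← Nat.card_zmultiples]
      have htop : AddSubgroup.zmultiples g = ⊤ := by
        rw [eq_top_iff]; intro x _; exact ha x
      rw [htop, AddSubgroup.card_top]
    -- every element of K is annihilated by m
    have hann : ∀ x : G, x ∈ K → m • x = 0 := by
      intro x hx
      have h1 : m • (⟨x, hx⟩ : K) = 0 := card_nsmul_eq_zero'
      have := congrArg (Subtype.val) h1
      simpa using this
    have hKle : K ≤ AddSubgroup.zmultiples (k • g) := by
      intro x hx
      obtain ⟨t, ht⟩ := ha x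
      have h1 : (m : ℤ) • x = 0 := by
        rw [natCast_zsmul]; exact hann x hx
      rw [← ht, smul_smul] at h1
      have h2 : (n : ℤ) ∣ m * t := by
        rw [← hg_ord]; exact addOrderOf_dvd_iff_zsmul_eq_zero.mpr h1
      obtain ⟨s, hs⟩ := h2
      have hts : t = k * s := by
        have : (m : ℤ) * t = (m : ℤ) * (k * s) := by
          rw [hs]; push_cast [hk]; ring
        exact mul_left_cancel₀ (by exact_mod_cast hm0.ne') this
      have ht' : t • g = x := ht
      refine ⟨s, ?_⟩
      show s • (k • g) = x
      rw [← natCast_zsmul g k, smul_smul, ← ht', hts]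
      congr 1
      ring
    have hordkg : addOrderOf (k • g) = m := by
      rw [addOrderOf_nsmul, hg_ord]
      rw [Nat.gcd_eq_right hkdvd, hk, Nat.mul_div_cancel_left m hk0]
    have hKeq : K = AddSubgroup.zmultiples (k • g) := by
      refine AddSubgroup.eq_of_le_of_card_ge hKle ?_
      rw [Nat.card_zmultiples, hordkg]
    have hkgK : k • g ∈ K := by rw [hKeq]; exact AddSubgroup.mem_zmultiples _
    obtain ⟨a'', ha''⟩ := hkgK
    -- B' is cyclic
    have hB'cyc : IsAddCyclic B' := by
      have hmem : ∀ x : B', ((x : A') : A) ∈ B := by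
        intro x
        have hx := x.2
        rw [AddMonoidHom.mem_ker, hφ, QuotientAddGroup.eq_zero_iff] at hx
        exact hx
      let ψ : B' →+ B := {
        toFun := fun x => ⟨((x : A') : A), hmem x⟩
        map_zero' := rfl
        map_add' := fun x y => rfl }
      have hinj : Function.Injective ψ := by
        intro x y hxy
        have hv := Subtype.ext_iff.mp hxy
        exact Subtype.ext (Subtype.ext hv)
      haveI := hB
      haveI : IsAddCyclic ψ.range := AddSubgroup.isAddCyclic ψ.range
      exact isAddCyclic_of_surjective (AddMonoidHom.ofInjective hinj).symm
        (AddMonoidHom.ofInjective hinj).symm.surjective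
    -- the generator of A' ⧸ B'
    have hgen : ∀ x : A' ⧸ B',
        x ∈ AddSubgroup.zmultiples (QuotientAddGroup.mk a'' : A' ⧸ B') := by
      intro x
      obtain ⟨y, rfl⟩ := QuotientAddGroup.mk_surjective x
      have hy : φ y ∈ K := ⟨y, rfl⟩
      rw [hKeq] at hy
      obtain ⟨t, ht⟩ := hy
      rw [← ha''] at ht
      have ht' : t • φ a'' = φ y := ht
      have hmem : y - t • a'' ∈ B' := by
        rw [hB'def, AddMonoidHom.mem_ker, map_sub, map_zsmul, ht', sub_self]
      refine ⟨t, ?_⟩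
      have heq : (QuotientAddGroup.mk (t • a'') : A' ⧸ B') = QuotientAddGroup.mk y := by
        rw [QuotientAddGroup.eq_iff_sub_mem]
        simpa using (neg_mem hmem)
      show t • (QuotientAddGroup.mk a'' : A' ⧸ B') = QuotientAddGroup.mk y
      rw [← QuotientAddGroup.mk_zsmul, heq]
    have hQcyc : IsAddCyclic (A' ⧸ B') := ⟨⟨_, hgen⟩⟩
    have hcardQ : Nat.card (A' ⧸ B') = m :=
      Nat.card_congr (QuotientAddGroup.quotientKerEquivRange φ).toEquiv
    -- each c i is divisible by k, and the quotients are coset numbers for B'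
    have key : ∀ i, ∃ d : ℕ, c i = k * d ∧ IsCosetNum B' a'' (h i) d := by
      intro i
      obtain ⟨hle, hmem⟩ := hc i
      have hsign : φ (h i) = (c i) • g ∨ φ (h i) = -((c i) • g) := by
        rcases hmem with hmem | hmem
        · left
          rw [hφ]
          have := QuotientAddGroup.eq_iff_sub_mem.mpr hmem
          rw [this, ← QuotientAddGroup.mk_nsmul]
        · right
          rw [hφ]
          have hmem' : ((h i : A)) - (-((c i) • a)) ∈ B := by simpa using hmem
          have := QuotientAddGroup.eq_iff_sub_mem.mpr hmem'
          rw [this, ← QuotientAddGroup.mk_nsmul, QuotientAddGroup.mk_neg]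
      have hcg : (c i) • g ∈ K := by
        rcases hsign with hs | hs
        · rw [← hs]; exact ⟨h i, rfl⟩
        · have : -φ (h i) = (c i) • g := by rw [hs, neg_neg]
          rw [← this]; exact neg_mem ⟨h i, rfl⟩
      have hzero : (m * c i) • g = 0 := by
        rw [mul_comm, mul_nsmul]; exact hann _ hcg
      have hdvd : n ∣ m * c i := by
        rw [← hg_ord]; exact addOrderOf_dvd_iff_nsmul_eq_zero.mpr hzero
      have hkc : k ∣ c i := by
        obtain ⟨s, hs⟩ := hdvd
        refine ⟨s, ?_⟩
        have : m * c i = m * (k * s) := by rw [hs, hk]; ring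
        exact Nat.eq_of_mul_eq_mul_left hm0 this
      obtain ⟨d, hd⟩ := hkc
      refine ⟨d, hd, ?_, ?_⟩
      · -- bound
        rw [hcardQ]
        have hle' : k * d ≤ (k * m) / 2 := by rw [← hd, ← hk]; exact hle
        by_contra h'
        have h1 : m + 1 ≤ 2 * d := by omega
        have h2 : k * (m + 1) ≤ k * (2 * d) := Nat.mul_le_mul_left k h1
        have h3 : 2 * (k * d) ≤ k * m := by
          calc 2 * (k * d) ≤ 2 * ((k * m) / 2) := by omega
          _ ≤ k * m := Nat.mul_div_le _ 2
        nlinarith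
      · -- membership
        have hφa : φ a'' = k • g := ha''
        have hφd : φ (d • a'') = (c i) • g := by
          rw [map_nsmul, hφa, smul_smul, mul_comm d k, ← hd]
        rcases hsign with hs | hs
        · left
          rw [hB'def, AddMonoidHom.mem_ker, map_sub, hφd, hs, sub_self]
        · right
          rw [hB'def, AddMonoidHom.mem_ker, map_add, hφd, hs, neg_add_cancel]
    choose d hd1 hd2 using key
    have hmid := hmain B' hB'cyc hQcyc a'' hgen d hd2
    have hce : c = fun i => k * d i := funext hd1
    rw [hce]
    exact middleTwoEq_mul k hmid
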